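/- If X is a reflexive Banach space and the pair (X, 𝕂) has property L_{p,o}, then X* is strictly convex. -/

import Mathlib

/-- The pair `(X, Y)` has property `L_{o,p}`: for every `ε > 0` and `x ∈ S_X` there is
`η(ε, x) > 0` such that any norm-one operator `T` with `‖T x‖ > 1 - η` attains its norm at a
point `x₀ ∈ S_X` with `‖x₀ - x‖ < ε`. -/
def HasLop (𝕜 X Y : Type*) [RCLike 𝕜] [NormedAddCommGroup X] [NormedSpace 𝕜 X]
    [NormedAddCommGroup Y] [NormedSpace 𝕜 Y] : Prop :=
  ∀ ε : ℝ, 0 < ε → ∀ x : X, ‖x‖ = 1 →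
    ∃ η : ℝ, 0 < η ∧ ∀ T : X →L[𝕜] Y, ‖T‖ = 1 → 1 - η < ‖T x‖ →
      ∃ x₀ : X, ‖x₀‖ = 1 ∧ ‖T x₀‖ = 1 ∧ ‖x₀ - x‖ < ε

/-- The pair `(X, Y)` has property `L_{p,o}`: for every `ε > 0` and norm-one operator `T` there
is `η(ε, T) > 0` such that whenever `x ∈ S_X` satisfies `‖T x‖ > 1 - η`, there is a norm-one
operator `S` attaining its norm at `x` with `‖S - T‖ < ε`. -/
def HasLpo (𝕜 X Y : Type*) [RCLike 𝕜] [NormedAddCommGroup X] [NormedSpace 𝕜 X]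
    [NormedAddCommGroup Y] [NormedSpace 𝕜 Y] : Prop :=
  ∀ ε : ℝ, 0 < ε → ∀ T : X →L[𝕜] Y, ‖T‖ = 1 →
    ∃ η : ℝ, 0 < η ∧ ∀ x : X, ‖x‖ = 1 → 1 - η < ‖T x‖ →
      ∃ S : X →L[𝕜] Y, ‖S‖ = 1 ∧ ‖S x‖ = 1 ∧ ‖S - T‖ < ε



lemma rclike_eq_one_of {𝕜 : Type*} [RCLike 𝕜] (a : 𝕜) (h1 : ‖a‖ ≤ 1)
    (h2 : 1 ≤ RCLike.re a) : a = 1 := by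
  have hre : RCLike.re a = 1 := le_antisymm ((RCLike.re_le_norm a).trans h1) h2
  have hsq : ‖a‖ ^ 2 = RCLike.re a * RCLike.re a + RCLike.im a * RCLike.im a :=
    RCLike.norm_sq_eq_def
  have him : RCLike.im a = 0 := by
    nlinarith [sq_nonneg (RCLike.im a), sq_nonneg ‖a‖, norm_nonneg a]
  apply RCLike.ext <;> simp [hre, him]

set_option maxHeartbeats 2000000 in
set_option maxHeartbeats 2000000 in
theorem dual_strictlyConvex_of_lpo' (𝕜 X : Type*) [RCLike 𝕜] [NormedAddCommGroup X]
    [NormedSpace 𝕜 X] [CompleteSpace X]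
    (hrefl : Function.Surjective (NormedSpace.inclusionInDoubleDual 𝕜 X))
    (h : ∀ ε : ℝ, 0 < ε → ∀ T : X →L[𝕜] 𝕜, ‖T‖ = 1 →
      ∃ η : ℝ, 0 < η ∧ ∀ x : X, ‖x‖ = 1 → 1 - η < ‖T x‖ →
        ∃ S : X →L[𝕜] 𝕜, ‖S‖ = 1 ∧ ‖S x‖ = 1 ∧ ‖S - T‖ < ε) :
    ∀ f g : X →L[𝕜] 𝕜, ‖f‖ = 1 → ‖g‖ = 1 → f ≠ g → ‖f + g‖ / 2 < 1 := by
  intro f g hf hg hne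
  by_contra hcon
  push_neg at hcon
  have hsum : ‖f + g‖ = 2 := by
    have := norm_add_le f g
    rw [hf, hg] at this
    linarith
  have hne0 : f + g ≠ 0 := by
    intro h0
    rw [h0, norm_zero] at hsum; norm_num at hsum
  obtain ⟨F, hF1, hFx⟩ := exists_dual_vector 𝕜 (f + g) (norm_ne_zero_iff.mpr hne0)
  obtain ⟨x, hx⟩ := hrefl F
  have hxnorm : ‖x‖ = 1 := by
    rw [← hF1, ← hx]
    exact ((NormedSpace.inclusionInDoubleDualLi 𝕜 (E := X)).norm_map x).symm
  have hfg : f x + g x = 2 := by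
    have h1 : F (f + g) = (f + g) x := by rw [← hx]; exact NormedSpace.dual_def 𝕜 X x (f + g)
    rw [hFx, hsum] at h1
    have h2 : ((2 : ℝ) : 𝕜) = 2 := by norm_cast
    rw [h2] at h1
    simpa using h1.symm
  have hfb : ‖f x‖ ≤ 1 := by
    simpa [hf, hxnorm] using f.le_opNorm x
  have hgb : ‖g x‖ ≤ 1 := by
    simpa [hg, hxnorm] using g.le_opNorm x
  have hfx : f x = 1 := by
    apply rclike_eq_one_of _ hfb
    have hre := congrArg RCLike.re hfg
    simp [map_add] at hre
    have hge : RCLike.re (g x) ≤ 1 := (RCLike.re_le_norm _).trans hgb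
    linarith
  have hgx : g x = 1 := by linear_combination hfg - hfx
  -- find y with f y = 0, g y = r > 0
  obtain ⟨y₀, hy₀⟩ : ∃ y₀ : X, f y₀ ≠ g y₀ := by
    by_contra hc
    push_neg at hc
    exact hne (ContinuousLinearMap.ext hc)
  set b : 𝕜 := g (y₀ - f y₀ • x) with hb
  have hbval : b = g y₀ - f y₀ := by simp [hb, hgx]
  have hbne : b ≠ 0 := by
    rw [hbval, sub_ne_zero]
    exact fun hcontra => hy₀ hcontra.symm
  set r : ℝ := ‖b‖ with hrdef
  have hr : 0 < r := norm_pos_iff.mpr hbne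
  set y : X := ((r : 𝕜) * b⁻¹) • (y₀ - f y₀ • x) with hy
  have hfy : f y = 0 := by simp [hy, hfx]
  have hgy : g y = (r : 𝕜) := by
    rw [hy, map_smul, ← hb]
    field_simp
    rw [smul_eq_mul, div_mul_cancel₀ _ hbne]
  have hyne : y ≠ 0 := by
    intro h0
    rw [h0, map_zero] at hgy
    exact hr.ne' (by exact_mod_cast hgy.symm)
  have hynorm : 0 < ‖y‖ := norm_pos_iff.mpr hyne
  clear_value y
  clear hy hb hbval
  clear_value b r
  -- apply L_{p,o}
  set ε : ℝ := r / (2 * ‖y‖) with hε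
  have hεpos : 0 < ε := by positivity
  obtain ⟨η, hη, H⟩ := h ε hεpos f hf
  set δ : ℝ := min (η / (2 * ‖y‖)) 1 with hδ
  have hδpos : 0 < δ := by
    apply lt_min _ one_pos
    positivity
  have hδy : δ * ‖y‖ < η := by
    have h1 : δ ≤ η / (2 * ‖y‖) := min_le_left _ _
    have h2 : δ * ‖y‖ ≤ (η / (2 * ‖y‖)) * ‖y‖ :=
      mul_le_mul_of_nonneg_right h1 hynorm.le
    have h3 : (η / (2 * ‖y‖)) * ‖y‖ = η / 2 := by field_simp
    nlinarith
  clear_value ε δ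
  set u : X := x + (δ : 𝕜) • y with hu
  have hfu : f u = 1 := by simp [hu, hfx, hfy]
  have hgu : g u = ((1 + δ * r : ℝ) : 𝕜) := by
    rw [hu, map_add, map_smul, hgx, hgy]
    push_cast [smul_eq_mul]
    ring
  have hune : 1 + δ * r ≤ ‖u‖ := by
    have h1 := g.le_opNorm u
    rw [hgu, hg, one_mul, RCLike.norm_ofReal] at h1
    rw [abs_of_nonneg (by positivity)] at h1
    exact h1
  have hupos : 0 < ‖u‖ := by nlinarith
  have huub : ‖u‖ ≤ 1 + δ * ‖y‖ := by
    rw [hu]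
    refine (norm_add_le _ _).trans ?_
    rw [hxnorm, norm_smul, RCLike.norm_ofReal, abs_of_nonneg hδpos.le]
  clear_value u
  set xd : X := ((‖u‖ : ℝ) : 𝕜)⁻¹ • u with hxd
  have hxdnorm : ‖xd‖ = 1 := by
    rw [hxd, norm_smul, norm_inv, RCLike.norm_ofReal, abs_of_nonneg hupos.le]
    field_simp
  have hfxd : ‖f xd‖ = ‖u‖⁻¹ := by
    rw [hxd, map_smul, norm_smul, norm_inv, RCLike.norm_ofReal, abs_of_nonneg hupos.le,
      hfu, norm_one, mul_one]
  have hlt : 1 - η < ‖f xd‖ := by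
    rw [hfxd]
    rcases le_or_gt η 1 with hη1 | hη1
    · have hk : (1 - η) * ‖u‖ < 1 := by
        have h1 : (1 - η) * ‖u‖ ≤ (1 - η) * (1 + δ * ‖y‖) :=
          mul_le_mul_of_nonneg_left huub (by linarith)
        nlinarith [mul_nonneg hη.le (mul_nonneg hδpos.le (norm_nonneg y))]
      calc 1 - η = (1 - η) * ‖u‖ * ‖u‖⁻¹ := by field_simp
        _ < 1 * ‖u‖⁻¹ := by
            apply mul_lt_mul_of_pos_right hk (by positivity)
        _ = ‖u‖⁻¹ := one_mul _
    · have : (0:ℝ) < ‖u‖⁻¹ := by positivity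
      linarith
  clear_value xd
  obtain ⟨S, hS1, hS2, hS3⟩ := H xd hxdnorm hlt
  have hSu : ‖S u‖ = ‖u‖ := by
    have : S xd = ((‖u‖ : ℝ) : 𝕜)⁻¹ • S u := by rw [hxd, map_smul]
    rw [this, norm_smul, norm_inv, RCLike.norm_ofReal, abs_of_nonneg hupos.le] at hS2
    field_simp at hS2
    linarith [hS2]
  have hSy : ‖S y‖ < r / 2 := by
    have h1 : S y = (S - f) y := by simp [hfy]
    rw [h1]
    calc ‖(S - f) y‖ ≤ ‖S - f‖ * ‖y‖ := (S - f).le_opNorm y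
      _ < ε * ‖y‖ := by exact mul_lt_mul_of_pos_right hS3 hynorm
      _ = r / 2 := by rw [hε]; field_simp
  have hSx : ‖S x‖ ≤ 1 := by simpa [hS1, hxnorm] using S.le_opNorm x
  have hfinal : ‖u‖ ≤ 1 + δ * ‖S y‖ := by
    calc ‖u‖ = ‖S u‖ := hSu.symm
      _ = ‖S x + (δ : 𝕜) * S y‖ := by rw [hu]; simp [map_add, map_smul, smul_eq_mul]
      _ ≤ ‖S x‖ + ‖(δ : 𝕜) * S y‖ := norm_add_le _ _
      _ ≤ 1 + δ * ‖S y‖ := by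
          rw [norm_mul, RCLike.norm_ofReal, abs_of_nonneg hδpos.le]
          linarith
  have hkey : δ * ‖S y‖ < δ * (r / 2) := mul_lt_mul_of_pos_left hSy hδpos
  have hkey2 : δ * (r / 2) < δ * r := by nlinarith
  linarith


/-- If  is a reflexive Banach space and  has property ,
then the dual  is strictly convex. -/
theorem dual_strictlyConvex_of_lpo (𝕜 X : Type*) [RCLike 𝕜] [NormedAddCommGroup X]
    [NormedSpace 𝕜 X] [CompleteSpace X]
    (hrefl : Function.Surjective (NormedSpace.inclusionInDoubleDual 𝕜 X))
    (h : HasLpo 𝕜 X 𝕜) :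
    ∀ f g : X →L[𝕜] 𝕜, ‖f‖ = 1 → ‖g‖ = 1 → f ≠ g → ‖f + g‖ / 2 < 1 :=
  dual_strictlyConvex_of_lpo' 𝕜 X hrefl h
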